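/- (Corollary 1.5(3), twisted case; eq. (1.43), equivalently (1.47) with signs as in (1.43).) Let l be a natural number. In the formal power series ring ℚ[[x₁, …, x₆, y₁, …, y_l, u]], the homogeneous component of total degree 6 of exp((1/24)·(Σ_{j=1}^{6} xⱼ² - Σ_{k=1}^{l} yₖ²)) · [ Π_{j=1}^{6} A(xⱼ) · Π_{k=1}^{l} 2cosh(yₖ/2) · cosh(u/2)^{-2} - Π_{j=1}^{6} A(xⱼ) · cosh(u/2) · ( 2^{l-3}·Σ_{k=1}^{l}(e^{yₖ} + e^{-yₖ}) - 2^{l-2}·(l-4) - 3·2^{l-3}·(e^{u} + e^{-u} - 2) ) ] equals 0. (This is the Chern-root form of the twisted 12-dimensional generalized anomaly cancellation formula, with no condition on first Pontryagin forms.) -/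

import Mathlib

open MvPowerSeries

/-- Formal exponential of a multivariate power series (with zero constant term):
the coefficient of a monomial `m` in `exp S` is `Σ_k coeff m (S^k) / k!`. -/
noncomputable def mexp {σ : Type*} (S : MvPowerSeries σ ℚ) : MvPowerSeries σ ℚ :=
  fun m => ∑ k ∈ Finset.range ((m.sum fun _ e => e) + 1),
    ((k.factorial : ℚ))⁻¹ * MvPowerSeries.coeff m (S ^ k)

/-- Formal hyperbolic cosine: `cosh S = (exp S + exp (-S)) / 2`. -/
noncomputable def mcosh {σ : Type*} (S : MvPowerSeries σ ℚ) : MvPowerSeries σ ℚ :=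
  (2 : ℚ)⁻¹ • (mexp S + mexp (-S))

namespace AnomalyAux
open Finset

variable {σ : Type*}

def deg (n : σ →₀ ℕ) : ℕ := n.sum fun _ e => e

lemma deg_add (a b : σ →₀ ℕ) : deg (a + b) = deg a + deg b :=
  Finsupp.sum_add_index' (fun _ => rfl) (fun _ _ _ => rfl)

lemma eq_zero_of_deg_eq_zero {n : σ →₀ ℕ} (h : deg n = 0) : n = 0 := by
  ext a
  by_contra ha
  have hmem : a ∈ n.support := Finsupp.mem_support_iff.mpr (by simpa using ha)
  have := (Finset.sum_eq_zero_iff.mp h) a hmem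
  exact (Finsupp.mem_support_iff.mp hmem) this

def Ord (d : ℕ) (f : MvPowerSeries σ ℚ) : Prop :=
  ∀ n : σ →₀ ℕ, deg n < d → MvPowerSeries.coeff n f = 0

def Hom (d : ℕ) (f : MvPowerSeries σ ℚ) : Prop :=
  ∀ n : σ →₀ ℕ, deg n ≠ d → MvPowerSeries.coeff n f = 0

lemma ord_mono {d d' : ℕ} {f : MvPowerSeries σ ℚ} (h : Ord d f) (hd : d' ≤ d) : Ord d' f :=
  fun n hn => h n (lt_of_lt_of_le hn hd)

lemma ord_zero (d : ℕ) : Ord d (0 : MvPowerSeries σ ℚ) := fun n _ => map_zero _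

lemma ord_add {d : ℕ} {f g : MvPowerSeries σ ℚ} (hf : Ord d f) (hg : Ord d g) :
    Ord d (f + g) := fun n hn => by rw [map_add, hf n hn, hg n hn, add_zero]

lemma ord_neg {d : ℕ} {f : MvPowerSeries σ ℚ} (hf : Ord d f) : Ord d (-f) :=
  fun n hn => by rw [map_neg, hf n hn, neg_zero]

lemma ord_sub {d : ℕ} {f g : MvPowerSeries σ ℚ} (hf : Ord d f) (hg : Ord d g) :
    Ord d (f - g) := by rw [sub_eq_add_neg]; exact ord_add hf (ord_neg hg)

lemma ord_smul {d : ℕ} (c : ℚ) {f : MvPowerSeries σ ℚ} (hf : Ord d f) : Ord d (c • f) :=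
  fun n hn => by rw [MvPowerSeries.coeff_smul, hf n hn, mul_zero]

lemma ord_sum {d : ℕ} {ι : Type*} {s : Finset ι} {f : ι → MvPowerSeries σ ℚ}
    (h : ∀ i ∈ s, Ord d (f i)) : Ord d (∑ i ∈ s, f i) := by
  intro n hn
  rw [map_sum]
  exact Finset.sum_eq_zero fun i hi => h i hi n hn

lemma ord_mul [DecidableEq σ] {a b : ℕ} {f g : MvPowerSeries σ ℚ}
    (hf : Ord a f) (hg : Ord b g) : Ord (a + b) (f * g) := by
  intro n hn
  rw [MvPowerSeries.coeff_mul]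
  apply Finset.sum_eq_zero
  rintro ⟨i, j⟩ hij
  rw [HasAntidiagonal.mem_antidiagonal] at hij
  have hdeg : deg i + deg j < a + b := by rw [← deg_add, hij]; exact hn
  rcases lt_or_ge (deg i) a with h | h
  · rw [hf i h, zero_mul]
  · rw [hg j (by omega), mul_zero]

lemma ord_mul_left [DecidableEq σ] {d : ℕ} (f : MvPowerSeries σ ℚ) {g : MvPowerSeries σ ℚ}
    (hg : Ord d g) : Ord d (f * g) := by
  have h0 : Ord 0 f := fun n hn => absurd hn (Nat.not_lt_zero _)
  simpa using ord_mul h0 hg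

lemma ord_mul_right [DecidableEq σ] {d : ℕ} {f : MvPowerSeries σ ℚ} (g : MvPowerSeries σ ℚ)
    (hf : Ord d f) : Ord d (f * g) := by
  have h0 : Ord 0 g := fun n hn => absurd hn (Nat.not_lt_zero _)
  simpa using ord_mul hf h0

lemma ord_pow [DecidableEq σ] {a : ℕ} {f : MvPowerSeries σ ℚ} (hf : Ord a f) (k : ℕ) :
    Ord (k * a) (f ^ k) := by
  induction k with
  | zero => exact fun n hn => absurd hn (by simp)
  | succ k ih =>
      have := ord_mul ih hf
      rw [pow_succ]
      simpa [Nat.succ_mul] using this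

lemma ord_X [DecidableEq σ] (i : σ) : Ord 1 (X i : MvPowerSeries σ ℚ) := by
  intro n hn
  rw [MvPowerSeries.coeff_X]
  have hne : n ≠ Finsupp.single i 1 := by
    intro h
    subst h
    simp [deg, Finsupp.sum_single_index] at hn
  rw [if_neg hne]

-- Hom lemmas
lemma hom_add {d : ℕ} {f g : MvPowerSeries σ ℚ} (hf : Hom d f) (hg : Hom d g) :
    Hom d (f + g) := fun n hn => by rw [map_add, hf n hn, hg n hn, add_zero]

lemma hom_sub {d : ℕ} {f g : MvPowerSeries σ ℚ} (hf : Hom d f) (hg : Hom d g) :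
    Hom d (f - g) := fun n hn => by rw [map_sub, hf n hn, hg n hn, sub_zero]

lemma hom_sum {d : ℕ} {ι : Type*} {s : Finset ι} {f : ι → MvPowerSeries σ ℚ}
    (h : ∀ i ∈ s, Hom d (f i)) : Hom d (∑ i ∈ s, f i) := by
  intro n hn
  rw [map_sum]
  exact Finset.sum_eq_zero fun i hi => h i hi n hn

lemma hom_mul [DecidableEq σ] {a b : ℕ} {f g : MvPowerSeries σ ℚ}
    (hf : Hom a f) (hg : Hom b g) : Hom (a + b) (f * g) := by
  intro n hn
  rw [MvPowerSeries.coeff_mul]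
  apply Finset.sum_eq_zero
  rintro ⟨i, j⟩ hij
  rw [HasAntidiagonal.mem_antidiagonal] at hij
  have hdeg : deg i + deg j ≠ a + b := by rw [← deg_add, hij]; exact hn
  by_cases h : deg i = a
  · rw [hg j (by omega), mul_zero]
  · rw [hf i h, zero_mul]

lemma hom_X [DecidableEq σ] (i : σ) : Hom 1 (X i : MvPowerSeries σ ℚ) := by
  intro n hn
  rw [MvPowerSeries.coeff_X]
  have hne : n ≠ Finsupp.single i 1 := by
    intro h; subst h
    simp [deg, Finsupp.sum_single_index] at hn
  rw [if_neg hne]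

lemma hom_C [DecidableEq σ] (q : ℚ) : Hom 0 (C (σ := σ) (R := ℚ) q) := by
  intro n hn
  rw [MvPowerSeries.coeff_C]
  have hne : n ≠ 0 := by
    intro h; subst h; simp [deg] at hn
  rw [if_neg hne]

lemma hom_pow [DecidableEq σ] {a : ℕ} {f : MvPowerSeries σ ℚ} (hf : Hom a f) (k : ℕ) :
    Hom (k * a) (f ^ k) := by
  induction k with
  | zero =>
      intro n hn
      have h0 : n ≠ 0 := fun h => by subst h; simp [deg] at hn
      rw [pow_zero, MvPowerSeries.coeff_one, if_neg h0]
  | succ k ih =>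
      have := hom_mul ih hf
      rw [pow_succ]
      simpa [Nat.succ_mul] using this

lemma coeff_mexp (S : MvPowerSeries σ ℚ) (n : σ →₀ ℕ) :
    MvPowerSeries.coeff n (mexp S) =
      ∑ k ∈ range (deg n + 1), ((k.factorial : ℚ))⁻¹ * MvPowerSeries.coeff n (S ^ k) :=
  rfl

lemma ord_one_of_constantCoeff {S : MvPowerSeries σ ℚ}
    (h : constantCoeff (σ := σ) (R := ℚ) S = 0) : Ord 1 S := by
  intro n hn
  have h0 : n = 0 := eq_zero_of_deg_eq_zero (Nat.lt_one_iff.mp hn)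
  subst h0
  rw [MvPowerSeries.coeff_zero_eq_constantCoeff]
  exact h

lemma constantCoeff_mexp (S : MvPowerSeries σ ℚ) : constantCoeff (σ := σ) (R := ℚ) (mexp S) = 1 := by
  rw [← MvPowerSeries.coeff_zero_eq_constantCoeff, coeff_mexp]
  have hd : deg (0 : σ →₀ ℕ) = 0 := by simp [deg]
  rw [hd]
  simp

lemma mexp_trunc [DecidableEq σ] {S : MvPowerSeries σ ℚ} (hS : constantCoeff (σ := σ) (R := ℚ) S = 0) :
    Ord 7 (mexp S - ∑ k ∈ range 7, ((k.factorial : ℚ))⁻¹ • S ^ k) := by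
  intro n hn
  rw [map_sub, coeff_mexp, map_sum]
  simp only [MvPowerSeries.coeff_smul]
  rw [Finset.sum_subset (Finset.range_subset_range.mpr (by omega : deg n + 1 ≤ 7))]
  · exact sub_self _
  · intro k hk hk2
    have hks : deg n < k := by
      simp only [Finset.mem_range] at hk hk2; omega
    have hp := ord_pow (ord_one_of_constantCoeff hS) k
    rw [hp n (by simpa using hks), mul_zero]

lemma scale_term (N : ℕ) (q : ℚ) (a : ℤ) (h : (N : ℚ) * q = a) (g : MvPowerSeries σ ℚ) :
    (N : MvPowerSeries σ ℚ) * (q • g) = (a : MvPowerSeries σ ℚ) * g := by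
  rw [MvPowerSeries.smul_eq_C_mul, ← map_natCast (C (σ := σ) (R := ℚ)) N, ← mul_assoc, ← map_mul, h,
    map_intCast]

lemma mexp_linear_trunc [DecidableEq σ] (c : ℚ) (i : σ) (N : ℕ) (a0 a1 a2 a3 a4 a5 a6 : ℤ)
    (h0 : (N : ℚ) * ((Nat.factorial 0 : ℚ)⁻¹ * c ^ 0) = a0)
    (h1 : (N : ℚ) * ((Nat.factorial 1 : ℚ)⁻¹ * c ^ 1) = a1)
    (h2 : (N : ℚ) * ((Nat.factorial 2 : ℚ)⁻¹ * c ^ 2) = a2)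
    (h3 : (N : ℚ) * ((Nat.factorial 3 : ℚ)⁻¹ * c ^ 3) = a3)
    (h4 : (N : ℚ) * ((Nat.factorial 4 : ℚ)⁻¹ * c ^ 4) = a4)
    (h5 : (N : ℚ) * ((Nat.factorial 5 : ℚ)⁻¹ * c ^ 5) = a5)
    (h6 : (N : ℚ) * ((Nat.factorial 6 : ℚ)⁻¹ * c ^ 6) = a6) :
    Ord 7 ((N : MvPowerSeries σ ℚ) * mexp (c • X i) -
      ((a0 : MvPowerSeries σ ℚ) * X i ^ 0 + (a1 : MvPowerSeries σ ℚ) * X i ^ 1 +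
        (a2 : MvPowerSeries σ ℚ) * X i ^ 2 + (a3 : MvPowerSeries σ ℚ) * X i ^ 3 +
        (a4 : MvPowerSeries σ ℚ) * X i ^ 4 + (a5 : MvPowerSeries σ ℚ) * X i ^ 5 +
        (a6 : MvPowerSeries σ ℚ) * X i ^ 6)) := by
  have hS : constantCoeff (σ := σ) (R := ℚ) ((c : ℚ) • X i) = 0 := by
    simp [MvPowerSeries.smul_eq_C_mul]
  have h := ord_mul_left (N : MvPowerSeries σ ℚ) (mexp_trunc hS)
  have key : (N : MvPowerSeries σ ℚ) * (∑ k ∈ range 7, ((k.factorial : ℚ))⁻¹ • (c • X i) ^ k)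
      = (a0 : MvPowerSeries σ ℚ) * X i ^ 0 + (a1 : MvPowerSeries σ ℚ) * X i ^ 1 +
        (a2 : MvPowerSeries σ ℚ) * X i ^ 2 + (a3 : MvPowerSeries σ ℚ) * X i ^ 3 +
        (a4 : MvPowerSeries σ ℚ) * X i ^ 4 + (a5 : MvPowerSeries σ ℚ) * X i ^ 5 +
        (a6 : MvPowerSeries σ ℚ) * X i ^ 6 := by
    simp only [Finset.sum_range_succ, Finset.sum_range_zero, smul_pow, smul_smul, zero_add,
      mul_add]
    rw [scale_term N _ a0 h0, scale_term N _ a1 h1, scale_term N _ a2 h2, scale_term N _ a3 h3,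
      scale_term N _ a4 h4, scale_term N _ a5 h5, scale_term N _ a6 h6]
  rw [mul_sub, key] at h
  exact h


lemma coeff_natCast_mul (N : ℕ) (f : MvPowerSeries σ ℚ) (n : σ →₀ ℕ) :
    MvPowerSeries.coeff n ((N : MvPowerSeries σ ℚ) * f) = (N : ℚ) * MvPowerSeries.coeff n f := by
  rw [← map_natCast (C (σ := σ) (R := ℚ)) N, MvPowerSeries.coeff_C_mul]

lemma ord_of_natCast_mul {d : ℕ} {N : ℕ} {f : MvPowerSeries σ ℚ}
    (h : Ord d ((N : MvPowerSeries σ ℚ) * f)) (hN : (N : ℚ) ≠ 0) : Ord d f := by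
  intro n hn
  have := h n hn
  rw [coeff_natCast_mul] at this
  exact (mul_eq_zero.mp this).resolve_left hN

lemma ord_of_X_mul [DecidableEq σ] {d : ℕ} {i : σ} {f : MvPowerSeries σ ℚ}
    (h : Ord (d + 1) ((X i : MvPowerSeries σ ℚ) * f)) : Ord d f := by
  intro n hn
  have hd : deg (Finsupp.single i 1 + n) < d + 1 := by
    rw [deg_add]
    have : deg (Finsupp.single i 1) = 1 := by simp [deg, Finsupp.sum_single_index]
    omega
  have h2 := h (Finsupp.single i 1 + n) hd
  rwa [MvPowerSeries.X_def, MvPowerSeries.coeff_add_monomial_mul, one_mul] at h2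

lemma cast_mul_inv_smul (N : ℕ) (hN : (N : ℚ) ≠ 0) (f : MvPowerSeries σ ℚ) :
    (N : MvPowerSeries σ ℚ) * ((N : ℚ)⁻¹ • f) = f := by
  rw [MvPowerSeries.smul_eq_C_mul, ← map_natCast (C (σ := σ) (R := ℚ)) N, ← mul_assoc, ← map_mul,
    mul_inv_cancel₀ hN, map_one, one_mul]

-- A-extraction
lemma Apart [DecidableEq σ] {A : MvPowerSeries σ ℚ} {i : σ}
    (hs : Ord 7 ((46080 : MvPowerSeries σ ℚ) *
        (mexp ((2:ℚ)⁻¹ • X i) - mexp (-((2:ℚ)⁻¹ • X i)))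
        - ((46080 : MvPowerSeries σ ℚ) * X i + 1920 * X i ^ 3 + 24 * X i ^ 5)))
    (hA : A * (mexp ((2:ℚ)⁻¹ • X i) - mexp (-((2:ℚ)⁻¹ • X i))) = X i) :
    Ord 4 ((24 : MvPowerSeries σ ℚ) * A - ((24 : MvPowerSeries σ ℚ) - X i ^ 2)) := by
  set s : MvPowerSeries σ ℚ := mexp ((2:ℚ)⁻¹ • X i) - mexp (-((2:ℚ)⁻¹ • X i)) with hs_def
  set ρ : MvPowerSeries σ ℚ :=
    (46080 : MvPowerSeries σ ℚ) * s - ((46080 : MvPowerSeries σ ℚ) * X i + 1920 * X i ^ 3 + 24 * X i ^ 5) with hρ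
  set g24 : MvPowerSeries σ ℚ := (24 : MvPowerSeries σ ℚ) * A - ((24 : MvPowerSeries σ ℚ) - X i ^ 2) with hg
  have hX5 : Ord 5 ((X i : MvPowerSeries σ ℚ) ^ 5) := by simpa using ord_pow (ord_X i) 5
  have claim1 : Ord 5 (g24 * ((46080 : MvPowerSeries σ ℚ) * X i + 1920 * X i ^ 3)) := by
    have e : g24 * ((46080 : MvPowerSeries σ ℚ) * X i + 1920 * X i ^ 3) =
        -((24 * A) * (ρ + 24 * X i ^ 5)) + 1920 * X i ^ 5 + 1105920 * (A * s - X i) := by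
      rw [hρ, hg]; ring
    rw [hA, sub_self, mul_zero, add_zero] at e
    rw [e]
    exact ord_add (ord_neg (ord_mul_left _ (ord_add (ord_mono hs (by norm_num))
      (ord_mul_left _ hX5)))) (ord_mul_left _ hX5)
  have claim2 : Ord 5 ((X i : MvPowerSeries σ ℚ) * ((2123366400 : MvPowerSeries σ ℚ) * g24)) := by
    have e2 : (X i : MvPowerSeries σ ℚ) * ((2123366400 : MvPowerSeries σ ℚ) * g24) =
        (g24 * ((46080 : MvPowerSeries σ ℚ) * X i + 1920 * X i ^ 3)) *
          ((46080 : MvPowerSeries σ ℚ) - 1920 * X i ^ 2) + 3686400 * (g24 * X i ^ 5) := by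
      ring
    rw [e2]
    exact ord_add (ord_mul_right _ claim1) (ord_mul_left _ (ord_mul_left _ hX5))
  have claim3 : Ord 4 ((2123366400 : MvPowerSeries σ ℚ) * g24) := ord_of_X_mul claim2
  have : ((2123366400 : ℕ) : MvPowerSeries σ ℚ) = (2123366400 : MvPowerSeries σ ℚ) := by
    norm_num
  exact ord_of_natCast_mul (N := 2123366400) (by rw [this]; exact claim3) (by norm_num)

-- product truncation lemma mod degree 4
lemma prod_trunc4 [DecidableEq σ] {ι : Type*} (c : ℕ) (s : Finset ι)
    (f g : ι → MvPowerSeries σ ℚ)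
    (h : ∀ j ∈ s, Ord 4 (f j - ((c : MvPowerSeries σ ℚ) - g j)))
    (h2 : ∀ j ∈ s, Ord 2 (g j)) :
    Ord 4 ((c : MvPowerSeries σ ℚ) * ∏ j ∈ s, f j -
      ((c : MvPowerSeries σ ℚ) ^ (s.card + 1) -
        (c : MvPowerSeries σ ℚ) ^ s.card * ∑ j ∈ s, g j)) := by
  classical
  induction s using Finset.induction_on with
  | empty =>
      have e : (c : MvPowerSeries σ ℚ) * ∏ j ∈ (∅ : Finset ι), f j -
          ((c : MvPowerSeries σ ℚ) ^ ((∅ : Finset ι).card + 1) -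
            (c : MvPowerSeries σ ℚ) ^ (∅ : Finset ι).card * ∑ j ∈ (∅ : Finset ι), g j) = 0 := by
        simp
      rw [e]; exact ord_zero 4
  | @insert a s ha ih =>
      have ih' := ih (fun j hj => h j (Finset.mem_insert_of_mem hj))
        (fun j hj => h2 j (Finset.mem_insert_of_mem hj))
      have ha' := h a (Finset.mem_insert_self a s)
      have hga := h2 a (Finset.mem_insert_self a s)
      rw [Finset.prod_insert ha, Finset.sum_insert ha, Finset.card_insert_of_notMem ha]
      have e : (c : MvPowerSeries σ ℚ) * (f a * ∏ j ∈ s, f j) -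
          ((c : MvPowerSeries σ ℚ) ^ (s.card + 1 + 1) -
            (c : MvPowerSeries σ ℚ) ^ (s.card + 1) * (g a + ∑ j ∈ s, g j)) =
          (f a - ((c : MvPowerSeries σ ℚ) - g a)) * ((c : MvPowerSeries σ ℚ) * ∏ j ∈ s, f j) +
          ((c : MvPowerSeries σ ℚ) - g a) *
            ((c : MvPowerSeries σ ℚ) * ∏ j ∈ s, f j -
              ((c : MvPowerSeries σ ℚ) ^ (s.card + 1) -
                (c : MvPowerSeries σ ℚ) ^ s.card * ∑ j ∈ s, g j)) +
          (c : MvPowerSeries σ ℚ) ^ s.card * (g a * ∑ j ∈ s, g j) := by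
        rw [pow_succ, pow_succ]; ring
      rw [e]
      refine ord_add (ord_add (ord_mul_right _ ha') (ord_mul_left _ ih')) ?_
      refine ord_mul_left _ ?_
      have := ord_mul hga (ord_sum (fun j hj => h2 j (Finset.mem_insert_of_mem hj)))
      simpa using this



set_option maxHeartbeats 4000000
noncomputable def GGs (p1 p2 p3 : MvPowerSeries σ ℚ) : MvPowerSeries σ ℚ :=
  46080 + 5760*p1 - 240*p2 + 16*p3 + 360*p1^2 - 30*(p1*p2) + 15*p1^3
noncomputable def Strs (u : MvPowerSeries σ ℚ) : MvPowerSeries σ ℚ := 46080 - 5760*u^2 + 600*u^4 - 61*u^6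
noncomputable def Cshat (u : MvPowerSeries σ ℚ) : MvPowerSeries σ ℚ := 46080 + 5760*u^2 + 120*u^4 + u^6
noncomputable def Zs (p1 p2 p3 u : MvPowerSeries σ ℚ) : MvPowerSeries σ ℚ :=
  23040 + 2880*p1 + 240*p2 + 8*p3 - 8640*u^2 - 720*u^4 - 24*u^6
noncomputable def H4s (p1 p2 u : MvPowerSeries σ ℚ) : MvPowerSeries σ ℚ := p1^2 - 2*p2 - 6*(p1*u^2) + 15*u^4

-- generated junk
noncomputable def J3 (p1 p2 p3 t : MvPowerSeries σ ℚ) : MvPowerSeries σ ℚ :=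
  (92160 : MvPowerSeries σ ℚ) * (p1 ^ 0 * (p2 ^ 0 * (p3 ^ 1 * (t ^ 2)))) +
      (1920 : MvPowerSeries σ ℚ) * (p1 ^ 0 * (p2 ^ 0 * (p3 ^ 1 * (t ^ 4)))) +
      (16 : MvPowerSeries σ ℚ) * (p1 ^ 0 * (p2 ^ 0 * (p3 ^ 1 * (t ^ 6)))) +
      ((-28800) : MvPowerSeries σ ℚ) * (p1 ^ 0 * (p2 ^ 1 * (p3 ^ 0 * (t ^ 4)))) +
      ((-240) : MvPowerSeries σ ℚ) * (p1 ^ 0 * (p2 ^ 1 * (p3 ^ 0 * (t ^ 6)))) +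
      (5760 : MvPowerSeries σ ℚ) * (p1 ^ 1 * (p2 ^ 0 * (p3 ^ 0 * (t ^ 6)))) +
      ((-172800) : MvPowerSeries σ ℚ) * (p1 ^ 1 * (p2 ^ 1 * (p3 ^ 0 * (t ^ 2)))) +
      ((-3600) : MvPowerSeries σ ℚ) * (p1 ^ 1 * (p2 ^ 1 * (p3 ^ 0 * (t ^ 4)))) +
      ((-30) : MvPowerSeries σ ℚ) * (p1 ^ 1 * (p2 ^ 1 * (p3 ^ 0 * (t ^ 6)))) +
      (43200 : MvPowerSeries σ ℚ) * (p1 ^ 2 * (p2 ^ 0 * (p3 ^ 0 * (t ^ 4)))) +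
      (360 : MvPowerSeries σ ℚ) * (p1 ^ 2 * (p2 ^ 0 * (p3 ^ 0 * (t ^ 6)))) +
      (86400 : MvPowerSeries σ ℚ) * (p1 ^ 3 * (p2 ^ 0 * (p3 ^ 0 * (t ^ 2)))) +
      (1800 : MvPowerSeries σ ℚ) * (p1 ^ 3 * (p2 ^ 0 * (p3 ^ 0 * (t ^ 4)))) +
      (15 : MvPowerSeries σ ℚ) * (p1 ^ 3 * (p2 ^ 0 * (p3 ^ 0 * (t ^ 6))))

noncomputable def J5 (p1 p2 p3 u : MvPowerSeries σ ℚ) : MvPowerSeries σ ℚ :=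
  (1623610884096000 : MvPowerSeries σ ℚ) * (p1 ^ 0 * (p2 ^ 0 * (p3 ^ 0 * (u ^ 8)))) +
      ((-70071091200000) : MvPowerSeries σ ℚ) * (p1 ^ 0 * (p2 ^ 0 * (p3 ^ 0 * (u ^ 10)))) +
      (4001483980800 : MvPowerSeries σ ℚ) * (p1 ^ 0 * (p2 ^ 0 * (p3 ^ 0 * (u ^ 12)))) +
      ((-293534171136000) : MvPowerSeries σ ℚ) * (p1 ^ 0 * (p2 ^ 0 * (p3 ^ 1 * (u ^ 2)))) +
      (30576476160000 : MvPowerSeries σ ℚ) * (p1 ^ 0 * (p2 ^ 0 * (p3 ^ 1 * (u ^ 4)))) +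
      ((-4637432217600) : MvPowerSeries σ ℚ) * (p1 ^ 0 * (p2 ^ 0 * (p3 ^ 1 * (u ^ 6)))) +
      (391761100800 : MvPowerSeries σ ℚ) * (p1 ^ 0 * (p2 ^ 0 * (p3 ^ 1 * (u ^ 8)))) +
      ((-26984448000) : MvPowerSeries σ ℚ) * (p1 ^ 0 * (p2 ^ 0 * (p3 ^ 1 * (u ^ 10)))) +
      (1371709440 : MvPowerSeries σ ℚ) * (p1 ^ 0 * (p2 ^ 0 * (p3 ^ 1 * (u ^ 12)))) +
      ((-550376570880000) : MvPowerSeries σ ℚ) * (p1 ^ 0 * (p2 ^ 1 * (p3 ^ 0 * (u ^ 4)))) +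
      (68797071360000 : MvPowerSeries σ ℚ) * (p1 ^ 0 * (p2 ^ 1 * (p3 ^ 0 * (u ^ 6)))) +
      ((-5876416512000) : MvPowerSeries σ ℚ) * (p1 ^ 0 * (p2 ^ 1 * (p3 ^ 0 * (u ^ 8)))) +
      (404766720000 : MvPowerSeries σ ℚ) * (p1 ^ 0 * (p2 ^ 1 * (p3 ^ 0 * (u ^ 10)))) +
      ((-20575641600) : MvPowerSeries σ ℚ) * (p1 ^ 0 * (p2 ^ 1 * (p3 ^ 0 * (u ^ 12)))) +
      ((-1669475598336000) : MvPowerSeries σ ℚ) * (p1 ^ 1 * (p2 ^ 0 * (p3 ^ 0 * (u ^ 6)))) +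
      (141033996288000 : MvPowerSeries σ ℚ) * (p1 ^ 1 * (p2 ^ 0 * (p3 ^ 0 * (u ^ 8)))) +
      ((-9714401280000) : MvPowerSeries σ ℚ) * (p1 ^ 1 * (p2 ^ 0 * (p3 ^ 0 * (u ^ 10)))) +
      (493815398400 : MvPowerSeries σ ℚ) * (p1 ^ 1 * (p2 ^ 0 * (p3 ^ 0 * (u ^ 12)))) +
      (366917713920000 : MvPowerSeries σ ℚ) * (p1 ^ 1 * (p2 ^ 1 * (p3 ^ 0 * (u ^ 2)))) +
      ((-61152952320000) : MvPowerSeries σ ℚ) * (p1 ^ 1 * (p2 ^ 1 * (p3 ^ 0 * (u ^ 4)))) +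
      (8663334912000 : MvPowerSeries σ ℚ) * (p1 ^ 1 * (p2 ^ 1 * (p3 ^ 0 * (u ^ 6)))) +
      ((-734552064000) : MvPowerSeries σ ℚ) * (p1 ^ 1 * (p2 ^ 1 * (p3 ^ 0 * (u ^ 8)))) +
      (50595840000 : MvPowerSeries σ ℚ) * (p1 ^ 1 * (p2 ^ 1 * (p3 ^ 0 * (u ^ 10)))) +
      ((-2571955200) : MvPowerSeries σ ℚ) * (p1 ^ 1 * (p2 ^ 1 * (p3 ^ 0 * (u ^ 12)))) +
      (733835427840000 : MvPowerSeries σ ℚ) * (p1 ^ 2 * (p2 ^ 0 * (p3 ^ 0 * (u ^ 4)))) +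
      ((-103960018944000) : MvPowerSeries σ ℚ) * (p1 ^ 2 * (p2 ^ 0 * (p3 ^ 0 * (u ^ 6)))) +
      (8814624768000 : MvPowerSeries σ ℚ) * (p1 ^ 2 * (p2 ^ 0 * (p3 ^ 0 * (u ^ 8)))) +
      ((-607150080000) : MvPowerSeries σ ℚ) * (p1 ^ 2 * (p2 ^ 0 * (p3 ^ 0 * (u ^ 10)))) +
      (30863462400 : MvPowerSeries σ ℚ) * (p1 ^ 2 * (p2 ^ 0 * (p3 ^ 0 * (u ^ 12)))) +
      ((-183458856960000) : MvPowerSeries σ ℚ) * (p1 ^ 3 * (p2 ^ 0 * (p3 ^ 0 * (u ^ 2)))) +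
      (30576476160000 : MvPowerSeries σ ℚ) * (p1 ^ 3 * (p2 ^ 0 * (p3 ^ 0 * (u ^ 4)))) +
      ((-4331667456000) : MvPowerSeries σ ℚ) * (p1 ^ 3 * (p2 ^ 0 * (p3 ^ 0 * (u ^ 6)))) +
      (367276032000 : MvPowerSeries σ ℚ) * (p1 ^ 3 * (p2 ^ 0 * (p3 ^ 0 * (u ^ 8)))) +
      ((-25297920000) : MvPowerSeries σ ℚ) * (p1 ^ 3 * (p2 ^ 0 * (p3 ^ 0 * (u ^ 10)))) +
      (1285977600 : MvPowerSeries σ ℚ) * (p1 ^ 3 * (p2 ^ 0 * (p3 ^ 0 * (u ^ 12))))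

noncomputable def J4 (u : MvPowerSeries σ ℚ) : MvPowerSeries σ ℚ :=
  ((-285120) : MvPowerSeries σ ℚ) * (u ^ 8) +
      ((-6720) : MvPowerSeries σ ℚ) * (u ^ 10) +
      ((-61) : MvPowerSeries σ ℚ) * (u ^ 12)

lemma ord_J3 [DecidableEq σ] {p1 p2 p3 t : MvPowerSeries σ ℚ}
    (hp1 : Ord 2 p1) (hp2 : Ord 4 p2) (hp3 : Ord 6 p3) (ht : Ord 1 t) :
    Ord 7 (J3 p1 p2 p3 t) := by
  rw [J3]
  exact (ord_add (ord_add (ord_add (ord_add (ord_add (ord_add (ord_add (ord_add (ord_add (ord_add (ord_add (ord_add (ord_add (ord_mul_left _ (ord_mono (ord_mul (ord_pow hp1 0) (ord_mul (ord_pow hp2 0) (ord_mul (ord_pow hp3 1) (ord_pow ht 2)))) (by norm_num : (7:ℕ) ≤ 0*2+0*4+1*6+2*1)))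
    (ord_mul_left _ (ord_mono (ord_mul (ord_pow hp1 0) (ord_mul (ord_pow hp2 0) (ord_mul (ord_pow hp3 1) (ord_pow ht 4)))) (by norm_num : (7:ℕ) ≤ 0*2+0*4+1*6+4*1))))
    (ord_mul_left _ (ord_mono (ord_mul (ord_pow hp1 0) (ord_mul (ord_pow hp2 0) (ord_mul (ord_pow hp3 1) (ord_pow ht 6)))) (by norm_num : (7:ℕ) ≤ 0*2+0*4+1*6+6*1))))
    (ord_mul_left _ (ord_mono (ord_mul (ord_pow hp1 0) (ord_mul (ord_pow hp2 1) (ord_mul (ord_pow hp3 0) (ord_pow ht 4)))) (by norm_num : (7:ℕ) ≤ 0*2+1*4+0*6+4*1))))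
    (ord_mul_left _ (ord_mono (ord_mul (ord_pow hp1 0) (ord_mul (ord_pow hp2 1) (ord_mul (ord_pow hp3 0) (ord_pow ht 6)))) (by norm_num : (7:ℕ) ≤ 0*2+1*4+0*6+6*1))))
    (ord_mul_left _ (ord_mono (ord_mul (ord_pow hp1 1) (ord_mul (ord_pow hp2 0) (ord_mul (ord_pow hp3 0) (ord_pow ht 6)))) (by norm_num : (7:ℕ) ≤ 1*2+0*4+0*6+6*1))))
    (ord_mul_left _ (ord_mono (ord_mul (ord_pow hp1 1) (ord_mul (ord_pow hp2 1) (ord_mul (ord_pow hp3 0) (ord_pow ht 2)))) (by norm_num : (7:ℕ) ≤ 1*2+1*4+0*6+2*1))))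
    (ord_mul_left _ (ord_mono (ord_mul (ord_pow hp1 1) (ord_mul (ord_pow hp2 1) (ord_mul (ord_pow hp3 0) (ord_pow ht 4)))) (by norm_num : (7:ℕ) ≤ 1*2+1*4+0*6+4*1))))
    (ord_mul_left _ (ord_mono (ord_mul (ord_pow hp1 1) (ord_mul (ord_pow hp2 1) (ord_mul (ord_pow hp3 0) (ord_pow ht 6)))) (by norm_num : (7:ℕ) ≤ 1*2+1*4+0*6+6*1))))
    (ord_mul_left _ (ord_mono (ord_mul (ord_pow hp1 2) (ord_mul (ord_pow hp2 0) (ord_mul (ord_pow hp3 0) (ord_pow ht 4)))) (by norm_num : (7:ℕ) ≤ 2*2+0*4+0*6+4*1))))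
    (ord_mul_left _ (ord_mono (ord_mul (ord_pow hp1 2) (ord_mul (ord_pow hp2 0) (ord_mul (ord_pow hp3 0) (ord_pow ht 6)))) (by norm_num : (7:ℕ) ≤ 2*2+0*4+0*6+6*1))))
    (ord_mul_left _ (ord_mono (ord_mul (ord_pow hp1 3) (ord_mul (ord_pow hp2 0) (ord_mul (ord_pow hp3 0) (ord_pow ht 2)))) (by norm_num : (7:ℕ) ≤ 3*2+0*4+0*6+2*1))))
    (ord_mul_left _ (ord_mono (ord_mul (ord_pow hp1 3) (ord_mul (ord_pow hp2 0) (ord_mul (ord_pow hp3 0) (ord_pow ht 4)))) (by norm_num : (7:ℕ) ≤ 3*2+0*4+0*6+4*1))))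
    (ord_mul_left _ (ord_mono (ord_mul (ord_pow hp1 3) (ord_mul (ord_pow hp2 0) (ord_mul (ord_pow hp3 0) (ord_pow ht 6)))) (by norm_num : (7:ℕ) ≤ 3*2+0*4+0*6+6*1))))

lemma ord_J5 [DecidableEq σ] {p1 p2 p3 u : MvPowerSeries σ ℚ}
    (hp1 : Ord 2 p1) (hp2 : Ord 4 p2) (hp3 : Ord 6 p3) (hu : Ord 1 u) :
    Ord 7 (J5 p1 p2 p3 u) := by
  rw [J5]
  exact (ord_add (ord_add (ord_add (ord_add (ord_add (ord_add (ord_add (ord_add (ord_add (ord_add (ord_add (ord_add (ord_add (ord_add (ord_add (ord_add (ord_add (ord_add (ord_add (ord_add (ord_add (ord_add (ord_add (ord_add (ord_add (ord_add (ord_add (ord_add (ord_add (ord_add (ord_add (ord_add (ord_add (ord_add (ord_mul_left _ (ord_mono (ord_mul (ord_pow hp1 0) (ord_mul (ord_pow hp2 0) (ord_mul (ord_pow hp3 0) (ord_pow hu 8)))) (by norm_num : (7:ℕ) ≤ 0*2+0*4+0*6+8*1)))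
    (ord_mul_left _ (ord_mono (ord_mul (ord_pow hp1 0) (ord_mul (ord_pow hp2 0) (ord_mul (ord_pow hp3 0) (ord_pow hu 10)))) (by norm_num : (7:ℕ) ≤ 0*2+0*4+0*6+10*1))))
    (ord_mul_left _ (ord_mono (ord_mul (ord_pow hp1 0) (ord_mul (ord_pow hp2 0) (ord_mul (ord_pow hp3 0) (ord_pow hu 12)))) (by norm_num : (7:ℕ) ≤ 0*2+0*4+0*6+12*1))))
    (ord_mul_left _ (ord_mono (ord_mul (ord_pow hp1 0) (ord_mul (ord_pow hp2 0) (ord_mul (ord_pow hp3 1) (ord_pow hu 2)))) (by norm_num : (7:ℕ) ≤ 0*2+0*4+1*6+2*1))))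
    (ord_mul_left _ (ord_mono (ord_mul (ord_pow hp1 0) (ord_mul (ord_pow hp2 0) (ord_mul (ord_pow hp3 1) (ord_pow hu 4)))) (by norm_num : (7:ℕ) ≤ 0*2+0*4+1*6+4*1))))
    (ord_mul_left _ (ord_mono (ord_mul (ord_pow hp1 0) (ord_mul (ord_pow hp2 0) (ord_mul (ord_pow hp3 1) (ord_pow hu 6)))) (by norm_num : (7:ℕ) ≤ 0*2+0*4+1*6+6*1))))
    (ord_mul_left _ (ord_mono (ord_mul (ord_pow hp1 0) (ord_mul (ord_pow hp2 0) (ord_mul (ord_pow hp3 1) (ord_pow hu 8)))) (by norm_num : (7:ℕ) ≤ 0*2+0*4+1*6+8*1))))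
    (ord_mul_left _ (ord_mono (ord_mul (ord_pow hp1 0) (ord_mul (ord_pow hp2 0) (ord_mul (ord_pow hp3 1) (ord_pow hu 10)))) (by norm_num : (7:ℕ) ≤ 0*2+0*4+1*6+10*1))))
    (ord_mul_left _ (ord_mono (ord_mul (ord_pow hp1 0) (ord_mul (ord_pow hp2 0) (ord_mul (ord_pow hp3 1) (ord_pow hu 12)))) (by norm_num : (7:ℕ) ≤ 0*2+0*4+1*6+12*1))))
    (ord_mul_left _ (ord_mono (ord_mul (ord_pow hp1 0) (ord_mul (ord_pow hp2 1) (ord_mul (ord_pow hp3 0) (ord_pow hu 4)))) (by norm_num : (7:ℕ) ≤ 0*2+1*4+0*6+4*1))))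
    (ord_mul_left _ (ord_mono (ord_mul (ord_pow hp1 0) (ord_mul (ord_pow hp2 1) (ord_mul (ord_pow hp3 0) (ord_pow hu 6)))) (by norm_num : (7:ℕ) ≤ 0*2+1*4+0*6+6*1))))
    (ord_mul_left _ (ord_mono (ord_mul (ord_pow hp1 0) (ord_mul (ord_pow hp2 1) (ord_mul (ord_pow hp3 0) (ord_pow hu 8)))) (by norm_num : (7:ℕ) ≤ 0*2+1*4+0*6+8*1))))
    (ord_mul_left _ (ord_mono (ord_mul (ord_pow hp1 0) (ord_mul (ord_pow hp2 1) (ord_mul (ord_pow hp3 0) (ord_pow hu 10)))) (by norm_num : (7:ℕ) ≤ 0*2+1*4+0*6+10*1))))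
    (ord_mul_left _ (ord_mono (ord_mul (ord_pow hp1 0) (ord_mul (ord_pow hp2 1) (ord_mul (ord_pow hp3 0) (ord_pow hu 12)))) (by norm_num : (7:ℕ) ≤ 0*2+1*4+0*6+12*1))))
    (ord_mul_left _ (ord_mono (ord_mul (ord_pow hp1 1) (ord_mul (ord_pow hp2 0) (ord_mul (ord_pow hp3 0) (ord_pow hu 6)))) (by norm_num : (7:ℕ) ≤ 1*2+0*4+0*6+6*1))))
    (ord_mul_left _ (ord_mono (ord_mul (ord_pow hp1 1) (ord_mul (ord_pow hp2 0) (ord_mul (ord_pow hp3 0) (ord_pow hu 8)))) (by norm_num : (7:ℕ) ≤ 1*2+0*4+0*6+8*1))))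
    (ord_mul_left _ (ord_mono (ord_mul (ord_pow hp1 1) (ord_mul (ord_pow hp2 0) (ord_mul (ord_pow hp3 0) (ord_pow hu 10)))) (by norm_num : (7:ℕ) ≤ 1*2+0*4+0*6+10*1))))
    (ord_mul_left _ (ord_mono (ord_mul (ord_pow hp1 1) (ord_mul (ord_pow hp2 0) (ord_mul (ord_pow hp3 0) (ord_pow hu 12)))) (by norm_num : (7:ℕ) ≤ 1*2+0*4+0*6+12*1))))
    (ord_mul_left _ (ord_mono (ord_mul (ord_pow hp1 1) (ord_mul (ord_pow hp2 1) (ord_mul (ord_pow hp3 0) (ord_pow hu 2)))) (by norm_num : (7:ℕ) ≤ 1*2+1*4+0*6+2*1))))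
    (ord_mul_left _ (ord_mono (ord_mul (ord_pow hp1 1) (ord_mul (ord_pow hp2 1) (ord_mul (ord_pow hp3 0) (ord_pow hu 4)))) (by norm_num : (7:ℕ) ≤ 1*2+1*4+0*6+4*1))))
    (ord_mul_left _ (ord_mono (ord_mul (ord_pow hp1 1) (ord_mul (ord_pow hp2 1) (ord_mul (ord_pow hp3 0) (ord_pow hu 6)))) (by norm_num : (7:ℕ) ≤ 1*2+1*4+0*6+6*1))))
    (ord_mul_left _ (ord_mono (ord_mul (ord_pow hp1 1) (ord_mul (ord_pow hp2 1) (ord_mul (ord_pow hp3 0) (ord_pow hu 8)))) (by norm_num : (7:ℕ) ≤ 1*2+1*4+0*6+8*1))))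
    (ord_mul_left _ (ord_mono (ord_mul (ord_pow hp1 1) (ord_mul (ord_pow hp2 1) (ord_mul (ord_pow hp3 0) (ord_pow hu 10)))) (by norm_num : (7:ℕ) ≤ 1*2+1*4+0*6+10*1))))
    (ord_mul_left _ (ord_mono (ord_mul (ord_pow hp1 1) (ord_mul (ord_pow hp2 1) (ord_mul (ord_pow hp3 0) (ord_pow hu 12)))) (by norm_num : (7:ℕ) ≤ 1*2+1*4+0*6+12*1))))
    (ord_mul_left _ (ord_mono (ord_mul (ord_pow hp1 2) (ord_mul (ord_pow hp2 0) (ord_mul (ord_pow hp3 0) (ord_pow hu 4)))) (by norm_num : (7:ℕ) ≤ 2*2+0*4+0*6+4*1))))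
    (ord_mul_left _ (ord_mono (ord_mul (ord_pow hp1 2) (ord_mul (ord_pow hp2 0) (ord_mul (ord_pow hp3 0) (ord_pow hu 6)))) (by norm_num : (7:ℕ) ≤ 2*2+0*4+0*6+6*1))))
    (ord_mul_left _ (ord_mono (ord_mul (ord_pow hp1 2) (ord_mul (ord_pow hp2 0) (ord_mul (ord_pow hp3 0) (ord_pow hu 8)))) (by norm_num : (7:ℕ) ≤ 2*2+0*4+0*6+8*1))))
    (ord_mul_left _ (ord_mono (ord_mul (ord_pow hp1 2) (ord_mul (ord_pow hp2 0) (ord_mul (ord_pow hp3 0) (ord_pow hu 10)))) (by norm_num : (7:ℕ) ≤ 2*2+0*4+0*6+10*1))))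
    (ord_mul_left _ (ord_mono (ord_mul (ord_pow hp1 2) (ord_mul (ord_pow hp2 0) (ord_mul (ord_pow hp3 0) (ord_pow hu 12)))) (by norm_num : (7:ℕ) ≤ 2*2+0*4+0*6+12*1))))
    (ord_mul_left _ (ord_mono (ord_mul (ord_pow hp1 3) (ord_mul (ord_pow hp2 0) (ord_mul (ord_pow hp3 0) (ord_pow hu 2)))) (by norm_num : (7:ℕ) ≤ 3*2+0*4+0*6+2*1))))
    (ord_mul_left _ (ord_mono (ord_mul (ord_pow hp1 3) (ord_mul (ord_pow hp2 0) (ord_mul (ord_pow hp3 0) (ord_pow hu 4)))) (by norm_num : (7:ℕ) ≤ 3*2+0*4+0*6+4*1))))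
    (ord_mul_left _ (ord_mono (ord_mul (ord_pow hp1 3) (ord_mul (ord_pow hp2 0) (ord_mul (ord_pow hp3 0) (ord_pow hu 6)))) (by norm_num : (7:ℕ) ≤ 3*2+0*4+0*6+6*1))))
    (ord_mul_left _ (ord_mono (ord_mul (ord_pow hp1 3) (ord_mul (ord_pow hp2 0) (ord_mul (ord_pow hp3 0) (ord_pow hu 8)))) (by norm_num : (7:ℕ) ≤ 3*2+0*4+0*6+8*1))))
    (ord_mul_left _ (ord_mono (ord_mul (ord_pow hp1 3) (ord_mul (ord_pow hp2 0) (ord_mul (ord_pow hp3 0) (ord_pow hu 10)))) (by norm_num : (7:ℕ) ≤ 3*2+0*4+0*6+10*1))))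
    (ord_mul_left _ (ord_mono (ord_mul (ord_pow hp1 3) (ord_mul (ord_pow hp2 0) (ord_mul (ord_pow hp3 0) (ord_pow hu 12)))) (by norm_num : (7:ℕ) ≤ 3*2+0*4+0*6+12*1))))

lemma ord_J4 [DecidableEq σ] {u : MvPowerSeries σ ℚ} (hu : Ord 1 u) :
    Ord 7 (J4 u) := by
  rw [J4]
  exact (ord_add (ord_add (ord_mul_left _ (ord_mono (ord_pow hu 8) (by norm_num : (7:ℕ) ≤ 8*1)))
    (ord_mul_left _ (ord_mono (ord_pow hu 10) (by norm_num : (7:ℕ) ≤ 10*1))))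
    (ord_mul_left _ (ord_mono (ord_pow hu 12) (by norm_num : (7:ℕ) ≤ 12*1))))

set_option maxHeartbeats 2000000 in
lemma R3_id (p1 p2 p3 t : MvPowerSeries σ ℚ) :
    (46080 + 5760*t^2 + 120*t^4 + t^6) * GGs p1 p2 p3 =
      46080 * GGs (t^2 + p1) (t^4 + p2) (t^6 + p3) + J3 p1 p2 p3 t := by
  simp only [GGs, J3]; ring

set_option maxHeartbeats 4000000 in
lemma R5_id (p1 p2 p3 u : MvPowerSeries σ ℚ) :
    23040 * (GGs p1 p2 p3 * (Strs u * Strs u)) =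
      2123366400 * (Cshat u * Zs p1 p2 p3 u) + 17612050268160000 * H4s p1 p2 u +
        733835427840000 * (p1 * H4s p1 p2 u) + J5 p1 p2 p3 u := by
  simp only [GGs, Strs, Cshat, Zs, H4s, J5]; ring

lemma R4_id (u : MvPowerSeries σ ℚ) :
    Cshat u * Strs u = 2123366400 + J4 u := by
  simp only [Cshat, Strs, J4]; ring


lemma ord_X_pow [DecidableEq σ] (i : σ) (k : ℕ) : Ord k ((X i : MvPowerSeries σ ℚ) ^ k) := by
  simpa using ord_pow (ord_X i) k

lemma hom_X_pow [DecidableEq σ] (i : σ) (k : ℕ) : Hom k ((X i : MvPowerSeries σ ℚ) ^ k) := by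
  simpa using hom_pow (hom_X i) k

lemma ord_mul_sub [DecidableEq σ] {d : ℕ} {x x' y y' : MvPowerSeries σ ℚ}
    (hx : Ord d (x - x')) (hy : Ord d (y - y')) : Ord d (x * y - x' * y') := by
  have e : x * y - x' * y' = x * (y - y') + (x - x') * y' := by ring
  rw [e]
  exact ord_add (ord_mul_left _ hy) (ord_mul_right _ hx)

lemma prod_GG [DecidableEq σ] {ι : Type*} (Y : ι → σ) (f : ι → MvPowerSeries σ ℚ)
    (s : Finset ι)
    (hf : ∀ k ∈ s, Ord 7 ((46080 : MvPowerSeries σ ℚ) * f k - 2 * Cshat (X (Y k)))) :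
    Ord 7 ((46080 : MvPowerSeries σ ℚ) * ∏ k ∈ s, ((46080 : MvPowerSeries σ ℚ) * f k) -
      (92160 : MvPowerSeries σ ℚ) ^ s.card *
        GGs (∑ k ∈ s, X (Y k) ^ 2) (∑ k ∈ s, X (Y k) ^ 4) (∑ k ∈ s, X (Y k) ^ 6)) := by
  classical
  induction s using Finset.induction_on with
  | empty =>
      have e : (46080 : MvPowerSeries σ ℚ) * ∏ k ∈ (∅ : Finset ι), ((46080 : MvPowerSeries σ ℚ) * f k) -
          (92160 : MvPowerSeries σ ℚ) ^ (∅ : Finset ι).card *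
            GGs (∑ k ∈ (∅ : Finset ι), X (Y k) ^ 2) (∑ k ∈ (∅ : Finset ι), X (Y k) ^ 4)
              (∑ k ∈ (∅ : Finset ι), X (Y k) ^ 6) = 0 := by
        simp [GGs]
      rw [e]; exact ord_zero 7
  | @insert a s ha ih =>
      have ih' := ih (fun k hk => hf k (Finset.mem_insert_of_mem hk))
      have hfa := hf a (Finset.mem_insert_self a s)
      rw [Finset.prod_insert ha, Finset.sum_insert ha, Finset.sum_insert ha,
        Finset.sum_insert ha, Finset.card_insert_of_notMem ha]
      have hp1 : Ord 2 (∑ k ∈ s, (X (Y k) : MvPowerSeries σ ℚ) ^ 2) :=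
        ord_sum fun k _ => ord_X_pow (Y k) 2
      have hp2 : Ord 4 (∑ k ∈ s, (X (Y k) : MvPowerSeries σ ℚ) ^ 4) :=
        ord_sum fun k _ => ord_X_pow (Y k) 4
      have hp3 : Ord 6 (∑ k ∈ s, (X (Y k) : MvPowerSeries σ ℚ) ^ 6) :=
        ord_sum fun k _ => ord_X_pow (Y k) 6
      have e : (46080 : MvPowerSeries σ ℚ) * ((46080 : MvPowerSeries σ ℚ) * f a *
            ∏ k ∈ s, ((46080 : MvPowerSeries σ ℚ) * f k)) -
          (92160 : MvPowerSeries σ ℚ) ^ (s.card + 1) *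
            GGs ((X (Y a)) ^ 2 + ∑ k ∈ s, X (Y k) ^ 2) ((X (Y a)) ^ 4 + ∑ k ∈ s, X (Y k) ^ 4)
              ((X (Y a)) ^ 6 + ∑ k ∈ s, X (Y k) ^ 6) =
          ((46080 : MvPowerSeries σ ℚ) * f a - 2 * Cshat (X (Y a))) *
            ((46080 : MvPowerSeries σ ℚ) * ∏ k ∈ s, ((46080 : MvPowerSeries σ ℚ) * f k)) +
          2 * Cshat (X (Y a)) *
            ((46080 : MvPowerSeries σ ℚ) * ∏ k ∈ s, ((46080 : MvPowerSeries σ ℚ) * f k) -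
              (92160 : MvPowerSeries σ ℚ) ^ s.card *
                GGs (∑ k ∈ s, X (Y k) ^ 2) (∑ k ∈ s, X (Y k) ^ 4) (∑ k ∈ s, X (Y k) ^ 6)) +
          (92160 : MvPowerSeries σ ℚ) ^ s.card * (2 *
            J3 (∑ k ∈ s, X (Y k) ^ 2) (∑ k ∈ s, X (Y k) ^ 4) (∑ k ∈ s, X (Y k) ^ 6) (X (Y a))) := by
        simp only [GGs, Cshat, J3]; ring
      rw [e]
      exact ord_add (ord_add (ord_mul_right _ hfa) (ord_mul_left _ ih'))
        (ord_mul_left _ (ord_mul_left _ (ord_J3 hp1 hp2 hp3 (ord_X (Y a)))))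

lemma cosh_tr [DecidableEq σ] (i : σ) :
    Ord 7 ((46080 : MvPowerSeries σ ℚ) * (mexp ((2:ℚ)⁻¹ • X i) + mexp (-((2:ℚ)⁻¹ • X i))) -
      2 * Cshat (X i)) := by
  have h1 := mexp_linear_trunc (σ := σ) ((2:ℚ)⁻¹) i 46080 46080 23040 5760 960 120 12 1
    (by norm_num [Nat.factorial]) (by norm_num [Nat.factorial]) (by norm_num [Nat.factorial])
    (by norm_num [Nat.factorial]) (by norm_num [Nat.factorial]) (by norm_num [Nat.factorial])
    (by norm_num [Nat.factorial])
  have h2 := mexp_linear_trunc (σ := σ) (-(2:ℚ)⁻¹) i 46080 46080 (-23040) 5760 (-960) 120 (-12) 1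
    (by norm_num [Nat.factorial]) (by norm_num [Nat.factorial]) (by norm_num [Nat.factorial])
    (by norm_num [Nat.factorial]) (by norm_num [Nat.factorial]) (by norm_num [Nat.factorial])
    (by norm_num [Nat.factorial])
  rw [neg_smul] at h2
  have h := ord_add h1 h2
  have e : (((46080:ℕ) : MvPowerSeries σ ℚ) * mexp ((2:ℚ)⁻¹ • X i) -
        (((46080:ℤ) : MvPowerSeries σ ℚ) * X i ^ 0 + ((23040:ℤ) : MvPowerSeries σ ℚ) * X i ^ 1 +
          ((5760:ℤ) : MvPowerSeries σ ℚ) * X i ^ 2 + ((960:ℤ) : MvPowerSeries σ ℚ) * X i ^ 3 +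
          ((120:ℤ) : MvPowerSeries σ ℚ) * X i ^ 4 + ((12:ℤ) : MvPowerSeries σ ℚ) * X i ^ 5 +
          ((1:ℤ) : MvPowerSeries σ ℚ) * X i ^ 6)) +
      (((46080:ℕ) : MvPowerSeries σ ℚ) * mexp (-((2:ℚ)⁻¹ • X i)) -
        (((46080:ℤ) : MvPowerSeries σ ℚ) * X i ^ 0 + (((-23040):ℤ) : MvPowerSeries σ ℚ) * X i ^ 1 +
          ((5760:ℤ) : MvPowerSeries σ ℚ) * X i ^ 2 + (((-960):ℤ) : MvPowerSeries σ ℚ) * X i ^ 3 +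
          ((120:ℤ) : MvPowerSeries σ ℚ) * X i ^ 4 + (((-12):ℤ) : MvPowerSeries σ ℚ) * X i ^ 5 +
          ((1:ℤ) : MvPowerSeries σ ℚ) * X i ^ 6)) =
      (46080 : MvPowerSeries σ ℚ) * (mexp ((2:ℚ)⁻¹ • X i) + mexp (-((2:ℚ)⁻¹ • X i))) -
        2 * Cshat (X i) := by
    simp only [Cshat]
    push_cast
    ring
  rwa [e] at h

lemma sinh_tr [DecidableEq σ] (i : σ) :
    Ord 7 ((46080 : MvPowerSeries σ ℚ) * (mexp ((2:ℚ)⁻¹ • X i) - mexp (-((2:ℚ)⁻¹ • X i))) -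
      ((46080 : MvPowerSeries σ ℚ) * X i + 1920 * X i ^ 3 + 24 * X i ^ 5)) := by
  have h1 := mexp_linear_trunc (σ := σ) ((2:ℚ)⁻¹) i 46080 46080 23040 5760 960 120 12 1
    (by norm_num [Nat.factorial]) (by norm_num [Nat.factorial]) (by norm_num [Nat.factorial])
    (by norm_num [Nat.factorial]) (by norm_num [Nat.factorial]) (by norm_num [Nat.factorial])
    (by norm_num [Nat.factorial])
  have h2 := mexp_linear_trunc (σ := σ) (-(2:ℚ)⁻¹) i 46080 46080 (-23040) 5760 (-960) 120 (-12) 1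
    (by norm_num [Nat.factorial]) (by norm_num [Nat.factorial]) (by norm_num [Nat.factorial])
    (by norm_num [Nat.factorial]) (by norm_num [Nat.factorial]) (by norm_num [Nat.factorial])
    (by norm_num [Nat.factorial])
  rw [neg_smul] at h2
  have h := ord_sub h1 h2
  have e : (((46080:ℕ) : MvPowerSeries σ ℚ) * mexp ((2:ℚ)⁻¹ • X i) -
        (((46080:ℤ) : MvPowerSeries σ ℚ) * X i ^ 0 + ((23040:ℤ) : MvPowerSeries σ ℚ) * X i ^ 1 +
          ((5760:ℤ) : MvPowerSeries σ ℚ) * X i ^ 2 + ((960:ℤ) : MvPowerSeries σ ℚ) * X i ^ 3 +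
          ((120:ℤ) : MvPowerSeries σ ℚ) * X i ^ 4 + ((12:ℤ) : MvPowerSeries σ ℚ) * X i ^ 5 +
          ((1:ℤ) : MvPowerSeries σ ℚ) * X i ^ 6)) -
      (((46080:ℕ) : MvPowerSeries σ ℚ) * mexp (-((2:ℚ)⁻¹ • X i)) -
        (((46080:ℤ) : MvPowerSeries σ ℚ) * X i ^ 0 + (((-23040):ℤ) : MvPowerSeries σ ℚ) * X i ^ 1 +
          ((5760:ℤ) : MvPowerSeries σ ℚ) * X i ^ 2 + (((-960):ℤ) : MvPowerSeries σ ℚ) * X i ^ 3 +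
          ((120:ℤ) : MvPowerSeries σ ℚ) * X i ^ 4 + (((-12):ℤ) : MvPowerSeries σ ℚ) * X i ^ 5 +
          ((1:ℤ) : MvPowerSeries σ ℚ) * X i ^ 6)) =
      (46080 : MvPowerSeries σ ℚ) * (mexp ((2:ℚ)⁻¹ • X i) - mexp (-((2:ℚ)⁻¹ • X i))) -
        ((46080 : MvPowerSeries σ ℚ) * X i + 1920 * X i ^ 3 + 24 * X i ^ 5) := by
    push_cast
    ring
  rwa [e] at h

lemma pair_tr [DecidableEq σ] (i : σ) :
    Ord 7 ((720 : MvPowerSeries σ ℚ) * (mexp (X i) + mexp (-X i)) -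
      ((1440 : MvPowerSeries σ ℚ) + 720 * X i ^ 2 + 60 * X i ^ 4 + 2 * X i ^ 6)) := by
  have h1 := mexp_linear_trunc (σ := σ) (1:ℚ) i 720 720 720 360 120 30 6 1
    (by norm_num [Nat.factorial]) (by norm_num [Nat.factorial]) (by norm_num [Nat.factorial])
    (by norm_num [Nat.factorial]) (by norm_num [Nat.factorial]) (by norm_num [Nat.factorial])
    (by norm_num [Nat.factorial])
  have h2 := mexp_linear_trunc (σ := σ) (-1:ℚ) i 720 720 (-720) 360 (-120) 30 (-6) 1
    (by norm_num [Nat.factorial]) (by norm_num [Nat.factorial]) (by norm_num [Nat.factorial])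
    (by norm_num [Nat.factorial]) (by norm_num [Nat.factorial]) (by norm_num [Nat.factorial])
    (by norm_num [Nat.factorial])
  rw [one_smul] at h1
  rw [neg_one_smul] at h2
  have h := ord_add h1 h2
  have e : (((720:ℕ) : MvPowerSeries σ ℚ) * mexp (X i) -
        (((720:ℤ) : MvPowerSeries σ ℚ) * X i ^ 0 + ((720:ℤ) : MvPowerSeries σ ℚ) * X i ^ 1 +
          ((360:ℤ) : MvPowerSeries σ ℚ) * X i ^ 2 + ((120:ℤ) : MvPowerSeries σ ℚ) * X i ^ 3 +
          ((30:ℤ) : MvPowerSeries σ ℚ) * X i ^ 4 + ((6:ℤ) : MvPowerSeries σ ℚ) * X i ^ 5 +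
          ((1:ℤ) : MvPowerSeries σ ℚ) * X i ^ 6)) +
      (((720:ℕ) : MvPowerSeries σ ℚ) * mexp (-X i) -
        (((720:ℤ) : MvPowerSeries σ ℚ) * X i ^ 0 + (((-720):ℤ) : MvPowerSeries σ ℚ) * X i ^ 1 +
          ((360:ℤ) : MvPowerSeries σ ℚ) * X i ^ 2 + (((-120):ℤ) : MvPowerSeries σ ℚ) * X i ^ 3 +
          ((30:ℤ) : MvPowerSeries σ ℚ) * X i ^ 4 + (((-6):ℤ) : MvPowerSeries σ ℚ) * X i ^ 5 +
          ((1:ℤ) : MvPowerSeries σ ℚ) * X i ^ 6)) =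
      (720 : MvPowerSeries σ ℚ) * (mexp (X i) + mexp (-X i)) -
        ((1440 : MvPowerSeries σ ℚ) + 720 * X i ^ 2 + 60 * X i ^ 4 + 2 * X i ^ 6) := by
    push_cast
    ring
  rwa [e] at h

lemma hom_ofNat [DecidableEq σ] (n : ℕ) [n.AtLeastTwo] :
    Hom 0 ((OfNat.ofNat n : MvPowerSeries σ ℚ)) := by
  rw [← map_ofNat (C (σ := σ) (R := ℚ)) n]
  exact hom_C _

lemma ord_congr {d : ℕ} {f g : MvPowerSeries σ ℚ} (h : Ord d f) (e : f = g) : Ord d g := e ▸ h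

end AnomalyAux

open AnomalyAux

abbrev Rl (l : ℕ) := MvPowerSeries ((Fin 6 ⊕ Fin l) ⊕ Unit) ℚ

set_option maxHeartbeats 4000000 in
/-- Corollary 1.5(3), twisted case (eq. (1.43)/(1.47)): in degree 6 (form degree 12),
`{e^{(1/24)(p₁(TX)-p₁(W))}[Â(TX) det^{1/2}(2cosh((√-1/4π)R^W))/cosh²(c/2)
   - Â(TX) cosh(c/2)(2^{l-3} ch(W_ℂ) - 2^{l-2}(l-4) - 3·2^{l-3}(e^c + e^{-c} - 2))]}^{(12)} = 0`,
at the level of Chern roots `±xⱼ` for `T_ℂX` (`dim X = 12`), `±yₖ` for `W_ℂ` (`rk W = 2l`),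
with `u` the Euler form of `ξ`. `A j` is the Â-series of `xⱼ`, and
`(mcosh ((2:ℚ)⁻¹ • u))⁻¹` is the multiplicative inverse of the unit power series `cosh(u/2)`. -/
theorem anomaly_dim12_twisted (l : ℕ)
    (A : Fin 6 → MvPowerSeries ((Fin 6 ⊕ Fin l) ⊕ Unit) ℚ)
    (hA : ∀ j, A j * (mexp ((2 : ℚ)⁻¹ • X (Sum.inl (Sum.inl j))) -
        mexp (-((2 : ℚ)⁻¹ • X (Sum.inl (Sum.inl j))))) = X (Sum.inl (Sum.inl j)))
    (m : ((Fin 6 ⊕ Fin l) ⊕ Unit) →₀ ℕ) (hm : (m.sum fun _ e => e) = 6) :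
    MvPowerSeries.coeff m
      (mexp ((24 : ℚ)⁻¹ •
          ((∑ j, X (Sum.inl (Sum.inl j)) ^ 2) - ∑ k, X (Sum.inl (Sum.inr k)) ^ 2)) *
        ((∏ j, A j) *
            (∏ k, (mexp ((2 : ℚ)⁻¹ • X (Sum.inl (Sum.inr k))) +
              mexp (-((2 : ℚ)⁻¹ • X (Sum.inl (Sum.inr k)))))) *
            ((mcosh ((2 : ℚ)⁻¹ • X (Sum.inr ())))⁻¹) ^ 2
          - (∏ j, A j) * mcosh ((2 : ℚ)⁻¹ • X (Sum.inr ())) *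
            ((2 : ℚ) ^ ((l : ℤ) - 3) •
                (∑ k, (mexp (X (Sum.inl (Sum.inr k))) + mexp (-X (Sum.inl (Sum.inr k)))))
              - MvPowerSeries.C (R := ℚ) ((2 : ℚ) ^ ((l : ℤ) - 2) * ((l : ℚ) - 4))
              - (3 * (2 : ℚ) ^ ((l : ℤ) - 3)) •
                (mexp (X (Sum.inr ())) + mexp (-X (Sum.inr ())) - 2))))
    = 0 := by

  classical
  set U : Rl l := X (Sum.inr ()) with hU
  set Sx : Rl l := ∑ j, X (Sum.inl (Sum.inl j)) ^ 2 with hSxdef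
  set P1 : Rl l := ∑ k, X (Sum.inl (Sum.inr k)) ^ 2 with hP1def
  set P2 : Rl l := ∑ k : Fin l, X (Sum.inl (Sum.inr k)) ^ 4 with hP2def
  set P3 : Rl l := ∑ k : Fin l, X (Sum.inl (Sum.inr k)) ^ 6 with hP3def
  set E : Rl l := mexp ((24 : ℚ)⁻¹ • (Sx - P1)) with hEdef
  set PA : Rl l := ∏ j, A j with hPAdef
  set PC : Rl l := ∏ k, (mexp ((2 : ℚ)⁻¹ • X (Sum.inl (Sum.inr k))) +
      mexp (-((2 : ℚ)⁻¹ • X (Sum.inl (Sum.inr k))))) with hPCdef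
  set cu : Rl l := mcosh ((2 : ℚ)⁻¹ • U) with hcudef
  set IV : Rl l := cu⁻¹ with hIVdef
  set S1 : Rl l := ∑ k, (mexp (X (Sum.inl (Sum.inr k))) +
      mexp (-X (Sum.inl (Sum.inr k)))) with hS1def
  set S2 : Rl l := mexp U + mexp (-U) - 2 with hS2def
  set Z : Rl l := (2 : ℚ) ^ ((l : ℤ) - 3) • S1
      - MvPowerSeries.C (R := ℚ) ((2 : ℚ) ^ ((l : ℤ) - 2) * ((l : ℚ) - 4))
      - (3 * (2 : ℚ) ^ ((l : ℤ) - 3)) • S2 with hZdef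
  -- basic order facts
  have hOSx : Ord 2 Sx := by rw [hSxdef]; exact ord_sum fun j _ => ord_X_pow _ 2
  have hOP1 : Ord 2 P1 := by rw [hP1def]; exact ord_sum fun k _ => ord_X_pow _ 2
  have hOP2 : Ord 4 P2 := by rw [hP2def]; exact ord_sum fun k _ => ord_X_pow _ 4
  have hOP3 : Ord 6 P3 := by rw [hP3def]; exact ord_sum fun k _ => ord_X_pow _ 6
  have hOU : Ord 1 U := by rw [hU]; exact ord_X _
  have hdm : AnomalyAux.deg m < 7 := by
    have : AnomalyAux.deg m = 6 := hm
    omega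
  have hc24 : ((24 : ℕ) : Rl l) = (24 : Rl l) := by push_cast; ring
  -- (1) A-factors
  have hA4 : ∀ j : Fin 6, Ord 4 ((24 : Rl l) * A j -
      ((24 : Rl l) - X (Sum.inl (Sum.inl j)) ^ 2)) :=
    fun j => Apart (sinh_tr _) (hA j)
  -- (2) product of A-factors
  have hPA : Ord 4 ((24 : Rl l) * ∏ j : Fin 6, ((24 : Rl l) * A j) -
      ((24 : Rl l) ^ (6 + 1) - (24 : Rl l) ^ 6 * Sx)) := by
    have h := prod_trunc4  24 Finset.univ (fun j => (24 : Rl l) * A j)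
      (fun j => X (Sum.inl (Sum.inl j)) ^ 2)
      (fun j _ => by rw [hc24]; exact hA4 j) (fun j _ => ord_X_pow _ 2)
    rw [hc24, Finset.card_univ, Fintype.card_fin, ← hSxdef] at h
    exact h
  -- (3) E
  have hQ0 : MvPowerSeries.constantCoeff (σ := (Fin 6 ⊕ Fin l) ⊕ Unit) (R := ℚ) ((24 : ℚ)⁻¹ • (Sx - P1)) = 0 := by
    rw [MvPowerSeries.smul_eq_C_mul, map_mul, map_sub, hSxdef, hP1def]
    simp
  have hQ2 : Ord 2 ((24 : ℚ)⁻¹ • (Sx - P1)) := ord_smul _ (ord_sub hOSx hOP1)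
  have hE7 := mexp_trunc hQ0
  have htail : Ord 4 ((∑ k ∈ Finset.range 7,
        ((k.factorial : ℚ))⁻¹ • ((24 : ℚ)⁻¹ • (Sx - P1)) ^ k) -
      (1 + (24 : ℚ)⁻¹ • (Sx - P1))) := by
    have e : (∑ k ∈ Finset.range 7,
          ((k.factorial : ℚ))⁻¹ • ((24 : ℚ)⁻¹ • (Sx - P1)) ^ k) -
        (1 + (24 : ℚ)⁻¹ • (Sx - P1)) =
        ((Nat.factorial 2 : ℚ))⁻¹ • ((24 : ℚ)⁻¹ • (Sx - P1)) ^ 2 +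
        ((Nat.factorial 3 : ℚ))⁻¹ • ((24 : ℚ)⁻¹ • (Sx - P1)) ^ 3 +
        ((Nat.factorial 4 : ℚ))⁻¹ • ((24 : ℚ)⁻¹ • (Sx - P1)) ^ 4 +
        ((Nat.factorial 5 : ℚ))⁻¹ • ((24 : ℚ)⁻¹ • (Sx - P1)) ^ 5 +
        ((Nat.factorial 6 : ℚ))⁻¹ • ((24 : ℚ)⁻¹ • (Sx - P1)) ^ 6 := by
      simp only [Finset.sum_range_succ, Finset.sum_range_zero, zero_add, pow_zero, pow_one,
        Nat.factorial_zero, Nat.factorial_one, Nat.cast_one, inv_one, one_smul]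
      abel
    rw [e]
    have t : ∀ k : ℕ, 2 ≤ k → Ord 4 (((Nat.factorial k : ℚ))⁻¹ • ((24 : ℚ)⁻¹ • (Sx - P1)) ^ k) :=
      fun k hk => ord_smul _ (ord_mono (ord_pow hQ2 k) (by omega))
    exact ord_add (ord_add (ord_add (ord_add (t 2 (by norm_num)) (t 3 (by norm_num)))
      (t 4 (by norm_num))) (t 5 (by norm_num))) (t 6 (by norm_num))
  have hEtr : Ord 4 (E - (1 + (24 : ℚ)⁻¹ • (Sx - P1))) := by
    have h := ord_add (ord_mono hE7 (by norm_num)) htail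
    exact ord_congr h (by abel)
  have hE4 : Ord 4 ((24 : Rl l) * E -
      ((24 : Rl l) + (Sx - P1))) := by
    have hQ24 : ((24 : ℕ) : Rl l) * ((24 : ℚ)⁻¹ • (Sx - P1)) = Sx - P1 :=
      cast_mul_inv_smul 24 (by norm_num) _
    rw [hc24] at hQ24
    have e2 : (24 : Rl l) * E - ((24 : Rl l) + (Sx - P1)) =
        (24 : Rl l) * (E - (1 + (24 : ℚ)⁻¹ • (Sx - P1))) +
        ((24 : Rl l) * ((24 : ℚ)⁻¹ • (Sx - P1)) - (Sx - P1)) := by ring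
    rw [e2, hQ24, sub_self, add_zero]
    exact ord_mul_left _ hEtr
  -- (4) D-part
  have hTT : Ord 4 (((24 : Rl l) * E) *
      ((24 : Rl l) * ∏ j : Fin 6, ((24 : Rl l) * A j)) -
      ((24 : Rl l) ^ 8 - (24 : Rl l) ^ 7 * P1)) := by
    have h0 := ord_mul_sub hE4 hPA
    have e : ((24 : Rl l) * E) *
        ((24 : Rl l) * ∏ j : Fin 6, ((24 : Rl l) * A j)) -
        ((24 : Rl l) ^ 8 - (24 : Rl l) ^ 7 * P1) =
        (((24 : Rl l) * E) *
          ((24 : Rl l) * ∏ j : Fin 6, ((24 : Rl l) * A j)) -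
          ((24 : Rl l) + (Sx - P1)) *
            ((24 : Rl l) ^ (6 + 1) - (24 : Rl l) ^ 6 * Sx)) +
        (24 : Rl l) ^ 6 * (Sx * P1 - Sx * Sx) +
        (24 : Rl l) ^ 6 * (P1 * Sx - P1 * P1) -
        (24 : Rl l) ^ 6 * (P1 * Sx - P1 * P1) := by ring
    rw [e]
    exact ord_sub (ord_add (ord_add h0
      (ord_mul_left _ (ord_sub (ord_mul hOSx hOP1) (ord_mul hOSx hOSx))))
      (ord_mul_left _ (ord_sub (ord_mul hOP1 hOSx) (ord_mul hOP1 hOP1))))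
      (ord_mul_left _ (ord_sub (ord_mul hOP1 hOSx) (ord_mul hOP1 hOP1)))
  -- (5) Z truncation
  have hS1tr : Ord 7 ((720 : Rl l) * S1 -
      ((1440 : Rl l) * (l : Rl l) + 720 * P1 + 60 * P2 + 2 * P3)) := by
    have hs := ord_sum (d := 7) (s := (Finset.univ : Finset (Fin l)))
      (f := fun k => (720 : Rl l) * (mexp (X (Sum.inl (Sum.inr k))) +
        mexp (-X (Sum.inl (Sum.inr k)))) -
        ((1440 : Rl l) + 720 * X (Sum.inl (Sum.inr k)) ^ 2 + 60 * X (Sum.inl (Sum.inr k)) ^ 4 +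
          2 * X (Sum.inl (Sum.inr k)) ^ 6))
      (fun k _ => pair_tr _)
    refine ord_congr hs ?_
    rw [Finset.sum_sub_distrib, ← Finset.mul_sum, ← hS1def, Finset.sum_add_distrib,
      Finset.sum_add_distrib, Finset.sum_add_distrib, ← Finset.mul_sum, ← Finset.mul_sum,
      ← Finset.mul_sum, ← hP1def, ← hP2def, ← hP3def, Finset.sum_const, Finset.card_univ,
      Fintype.card_fin, nsmul_eq_mul]
    push_cast
    ring
  have hS2tr : Ord 7 ((720 : Rl l) * S2 - (720 * U ^ 2 + 60 * U ^ 4 + 2 * U ^ 6)) := by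
    have h := pair_tr (σ := (Fin 6 ⊕ Fin l) ⊕ Unit) (Sum.inr ())
    rw [← hU] at h
    refine ord_congr h ?_
    rw [hS2def]; ring
  have h2ne : (2:ℚ) ≠ 0 := by norm_num
  have hzp3 : (2:ℚ) ^ ((l:ℤ) - 3) = (2:ℚ)^l / 8 := by
    rw [zpow_sub₀ h2ne, zpow_natCast]; norm_num
  have hzp2 : (2:ℚ) ^ ((l:ℤ) - 2) = (2:ℚ)^l / 4 := by
    rw [zpow_sub₀ h2ne, zpow_natCast]; norm_num
  have hZ : Ord 7 ((23040 : Rl l) * Z - (2 : Rl l)^l * Zs P1 P2 P3 U) := by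
    have h1 : (23040 : Rl l) * ((2:ℚ)^((l:ℤ)-3) • S1) = (2 : Rl l)^l * ((2880 : Rl l) * S1) := by
      rw [MvPowerSeries.smul_eq_C_mul, ← map_ofNat (C (σ := (Fin 6 ⊕ Fin l) ⊕ Unit) (R := ℚ)) 23040,
        ← mul_assoc, ← map_mul,
        show (23040:ℚ) * (2:ℚ)^((l:ℤ)-3) = (2:ℚ)^l * 2880 by rw [hzp3]; ring,
        map_mul, map_pow, map_ofNat, map_ofNat, mul_assoc]
    have h2 : (23040 : Rl l) *
        (MvPowerSeries.C (σ := (Fin 6 ⊕ Fin l) ⊕ Unit) (R := ℚ) ((2:ℚ)^((l:ℤ)-2) * ((l:ℚ) - 4))) =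
        (2 : Rl l)^l * ((5760 : Rl l) * ((l : Rl l) - 4)) := by
      rw [← map_ofNat (C (σ := (Fin 6 ⊕ Fin l) ⊕ Unit) (R := ℚ)) 23040, ← map_mul,
        show (23040:ℚ) * ((2:ℚ)^((l:ℤ)-2) * ((l:ℚ) - 4)) = (2:ℚ)^l * (5760 * ((l:ℚ) - 4)) by
          rw [hzp2]; ring]
      simp only [map_mul, map_pow, map_sub, map_natCast, map_ofNat]
    have h3 : (23040 : Rl l) * ((3 * (2:ℚ)^((l:ℤ)-3)) • S2) =
        (2 : Rl l)^l * ((8640 : Rl l) * S2) := by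
      rw [MvPowerSeries.smul_eq_C_mul, ← map_ofNat (C (σ := (Fin 6 ⊕ Fin l) ⊕ Unit) (R := ℚ)) 23040,
        ← mul_assoc, ← map_mul,
        show (23040:ℚ) * (3 * (2:ℚ)^((l:ℤ)-3)) = (2:ℚ)^l * 8640 by rw [hzp3]; ring,
        map_mul, map_pow, map_ofNat, map_ofNat, mul_assoc]
    have e : (23040 : Rl l) * Z = (2 : Rl l)^l *
        ((2880 : Rl l) * S1 - (5760 : Rl l) * ((l : Rl l) - 4) - (8640 : Rl l) * S2) := by
      rw [hZdef, mul_sub, mul_sub, h1, h2, h3]; ring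
    rw [e, ← mul_sub]
    refine ord_mul_left _ ?_
    have e2 : (2880 : Rl l) * S1 - (5760 : Rl l) * ((l : Rl l) - 4) - (8640 : Rl l) * S2 -
        Zs P1 P2 P3 U =
        (4 : Rl l) * ((720 : Rl l) * S1 -
          ((1440 : Rl l) * (l : Rl l) + 720 * P1 + 60 * P2 + 2 * P3))
        - (12 : Rl l) * ((720 : Rl l) * S2 - (720 * U ^ 2 + 60 * U ^ 4 + 2 * U ^ 6)) := by
      simp only [Zs]; ring
    rw [e2]
    exact ord_sub (ord_mul_left _ hS1tr) (ord_mul_left _ hS2tr)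
  -- (6) cosh factor and inverse
  have hCU : Ord 7 ((46080 : Rl l) * cu - Cshat U) := by
    have h := cosh_tr (σ := (Fin 6 ⊕ Fin l) ⊕ Unit) (Sum.inr ())
    rw [← hU] at h
    have hhalf : (2 : Rl l) * (MvPowerSeries.C (σ := (Fin 6 ⊕ Fin l) ⊕ Unit) (R := ℚ) (2⁻¹ : ℚ)) = 1 := by
      rw [← map_ofNat (C (σ := (Fin 6 ⊕ Fin l) ⊕ Unit) (R := ℚ)) 2, ← map_mul]
      norm_num
    have e : (2 : Rl l) * ((46080 : Rl l) * cu - Cshat U) =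
        (46080 : Rl l) * (mexp ((2:ℚ)⁻¹ • U) + mexp (-((2:ℚ)⁻¹ • U))) - 2 * Cshat U := by
      have hm2 : mcosh ((2:ℚ)⁻¹ • U) = (2:ℚ)⁻¹ • (mexp ((2:ℚ)⁻¹ • U) + mexp (-((2:ℚ)⁻¹ • U))) :=
        rfl
      rw [hcudef, hm2, MvPowerSeries.smul_eq_C_mul]
      linear_combination (46080 : Rl l) * (mexp ((2:ℚ)⁻¹ • U) + mexp (-((2:ℚ)⁻¹ • U))) * hhalf
    have h2 : Ord 7 ((2 : Rl l) * ((46080 : Rl l) * cu - Cshat U)) := by rw [e]; exact h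
    refine ord_of_natCast_mul (N := 2) ?_ (by norm_num)
    rw [show ((2:ℕ) : Rl l) = (2 : Rl l) by push_cast; ring]
    exact h2
  have hcu0 : MvPowerSeries.constantCoeff (σ := (Fin 6 ⊕ Fin l) ⊕ Unit) (R := ℚ) cu ≠ 0 := by
    rw [hcudef]
    simp only [mcosh, MvPowerSeries.smul_eq_C_mul, map_mul, map_add,
      MvPowerSeries.constantCoeff_C, constantCoeff_mexp]
    norm_num
  have hmul : IV * cu = 1 := by
    rw [hIVdef, mul_comm]
    exact MvPowerSeries.mul_inv_cancel _ hcu0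
  have hIV7 : Ord 7 ((46080 : Rl l) * IV - Strs U) := by
    have hs7 : Ord 7 ((46080 : Rl l) * ((46080 : Rl l) - cu * Strs U)) := by
      have e : (46080 : Rl l) * ((46080 : Rl l) - cu * Strs U) =
          -(J4 U) - ((46080 : Rl l) * cu - Cshat U) * Strs U := by
        linear_combination - R4_id U
      rw [e]
      exact ord_sub (ord_neg (ord_J4 hOU)) (ord_mul_right _ hCU)
    have hmid : Ord 7 ((46080 : Rl l) - cu * Strs U) := by
      refine ord_of_natCast_mul (N := 46080) ?_ (by norm_num)
      rw [show ((46080:ℕ) : Rl l) = (46080 : Rl l) by push_cast; ring]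
      exact hs7
    have e2 : (46080 : Rl l) * IV - Strs U = IV * ((46080 : Rl l) - cu * Strs U) := by
      linear_combination (Strs U) * hmul
    rw [e2]
    exact ord_mul_left _ hmid
  -- (7) PC product
  set PCb : Rl l := ∏ k : Fin l, ((46080 : Rl l) *
      (mexp ((2 : ℚ)⁻¹ • X (Sum.inl (Sum.inr k))) +
        mexp (-((2 : ℚ)⁻¹ • X (Sum.inl (Sum.inr k)))))) with hPCb
  have hPC : Ord 7 ((46080 : Rl l) * PCb - (92160 : Rl l) ^ l * GGs P1 P2 P3) := by
    have h := prod_GG (fun k : Fin l => (Sum.inl (Sum.inr k) : (Fin 6 ⊕ Fin l) ⊕ Unit))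
      (fun k => mexp ((2 : ℚ)⁻¹ • X (Sum.inl (Sum.inr k))) +
        mexp (-((2 : ℚ)⁻¹ • X (Sum.inl (Sum.inr k))))) Finset.univ
      (fun k _ => cosh_tr _)
    rw [Finset.card_univ, Fintype.card_fin, ← hP1def, ← hP2def, ← hP3def, ← hPCb] at h
    exact h
  -- (8) W assembly
  set WS : Rl l := (23040 : Rl l) * (((46080 : Rl l) * PCb) *
      (((46080 : Rl l) * IV) * ((46080 : Rl l) * IV))) -
      (2123366400 : Rl l) * ((46080 : Rl l)^l * (((46080 : Rl l) * cu) * ((23040 : Rl l) * Z)))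
    with hWS
  set WT : Rl l := (2 : Rl l)^l * (46080 : Rl l)^l * ((17612050268160000 : Rl l) * H4s P1 P2 U +
      (733835427840000 : Rl l) * (P1 * H4s P1 P2 U)) with hWT
  have w1 : Ord 7 (((46080 : Rl l) * PCb) * (((46080 : Rl l) * IV) * ((46080 : Rl l) * IV)) -
      ((92160 : Rl l) ^ l * GGs P1 P2 P3) * (Strs U * Strs U)) :=
    ord_mul_sub hPC (ord_mul_sub hIV7 hIV7)
  have w2 : Ord 7 (((46080 : Rl l) * cu) * ((23040 : Rl l) * Z) -
      Cshat U * ((2 : Rl l)^l * Zs P1 P2 P3 U)) := ord_mul_sub hCU hZ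
  have HW : Ord 7 (WS - WT) := by
    have h92 : (92160 : Rl l)^l = (2 : Rl l)^l * (46080 : Rl l)^l := by
      rw [← mul_pow]; norm_num
    have e5 : 23040 * (GGs P1 P2 P3 * (Strs U * Strs U)) -
        2123366400 * (Cshat U * Zs P1 P2 P3 U) - 17612050268160000 * H4s P1 P2 U -
        733835427840000 * (P1 * H4s P1 P2 U) = J5 P1 P2 P3 U := by
      linear_combination R5_id P1 P2 P3 U
    have e : WS - WT = (23040 : Rl l) * (((46080 : Rl l) * PCb) *
        (((46080 : Rl l) * IV) * ((46080 : Rl l) * IV)) -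
        ((92160 : Rl l) ^ l * GGs P1 P2 P3) * (Strs U * Strs U))
        - (2123366400 : Rl l) * ((46080 : Rl l)^l * (((46080 : Rl l) * cu) * ((23040 : Rl l) * Z) -
          Cshat U * ((2 : Rl l)^l * Zs P1 P2 P3 U)))
        + (2 : Rl l)^l * (46080 : Rl l)^l * (23040 * (GGs P1 P2 P3 * (Strs U * Strs U)) -
          2123366400 * (Cshat U * Zs P1 P2 P3 U) - 17612050268160000 * H4s P1 P2 U -
          733835427840000 * (P1 * H4s P1 P2 U)) := by
      rw [hWS, hWT, h92]; ring
    rw [e, e5]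
    exact ord_add (ord_sub (ord_mul_left _ w1) (ord_mul_left _ (ord_mul_left _ w2)))
      (ord_mul_left _ (ord_J5 hOP1 hOP2 hOP3 hOU))
  have ordH4s : Ord 4 (H4s P1 P2 U) := by
    simp only [H4s]
    have hsq : Ord 4 (P1 ^ 2) := by simpa using ord_pow hOP1 2
    have hu2 : Ord 2 (U ^ 2) := by simpa using ord_pow hOU 2
    have hu4 : Ord 4 (U ^ 4) := by simpa using ord_pow hOU 4
    exact ord_add (ord_sub (ord_sub hsq (ord_mul_left _ hOP2))
      (ord_mul_left _ (ord_mul hOP1 hu2))) (ord_mul_left _ hu4)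
  have ordWT4 : Ord 4 WT := by
    rw [hWT]
    exact ord_mul_left _ (ord_add (ord_mul_left _ ordH4s)
      (ord_mul_left _ (ord_mul_left _ ordH4s)))
  have ordWS4 : Ord 4 WS := ord_congr (ord_add (ord_mono HW (by norm_num)) ordWT4) (by ring)
  set FinalT : Rl l := ((2 : Rl l)^l * (46080 : Rl l)^l * (24 : Rl l)^8 * 17612050268160000) *
      H4s P1 P2 U with hFinalT
  have HTOT : Ord 7 (((24 : Rl l) * E) * (((24 : Rl l) *
      ∏ j : Fin 6, ((24 : Rl l) * A j)) * WS) - FinalT) := by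
    have e : ((24 : Rl l) * E) * (((24 : Rl l) * ∏ j : Fin 6, ((24 : Rl l) * A j)) * WS) -
        FinalT =
        (((24 : Rl l) * E) * ((24 : Rl l) * ∏ j : Fin 6, ((24 : Rl l) * A j)) -
          ((24 : Rl l)^8 - (24 : Rl l)^7 * P1)) * WS
        + ((24 : Rl l)^8 - (24 : Rl l)^7 * P1) * (WS - WT)
        - ((24 : Rl l)^7 * (733835427840000 : Rl l)) *
            ((2 : Rl l)^l * ((46080 : Rl l)^l * (P1^2 * H4s P1 P2 U))) := by
      rw [hWT, hFinalT]; ring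
    rw [e]
    refine ord_sub (ord_add (ord_mono (ord_mul hTT ordWS4) (by norm_num))
      (ord_mul_left _ HW)) ?_
    refine ord_mul_left _ (ord_mul_left _ (ord_mul_left _ ?_))
    exact ord_mono (ord_mul (show Ord 4 (P1^2) by simpa using ord_pow hOP1 2) ordH4s)
      (by norm_num)
  have HomFinal : MvPowerSeries.coeff m FinalT = 0 := by
    have h1 : Hom 2 P1 := by rw [hP1def]; exact hom_sum fun k _ => hom_X_pow _ 2
    have h2 : Hom 4 P2 := by rw [hP2def]; exact hom_sum fun k _ => hom_X_pow _ 4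
    have hu2 : Hom 2 (U ^ 2) := by rw [hU]; exact hom_X_pow _ 2
    have hu4 : Hom 4 (U ^ 4) := by rw [hU]; exact hom_X_pow _ 4
    have homH4s : Hom 4 (H4s P1 P2 U) := by
      simp only [H4s]
      have hsq : Hom 4 (P1 ^ 2) := by
        rw [sq]; simpa using hom_mul h1 h1
      refine hom_add (hom_sub (hom_sub hsq ?_) ?_) ?_
      · simpa using hom_mul (hom_ofNat 2) h2
      · simpa using hom_mul (hom_ofNat 6) (hom_mul h1 hu2)
      · simpa using hom_mul (hom_ofNat 15) hu4
    have hom2l : Hom 0 ((2 : Rl l)^l) := by simpa using hom_pow (hom_ofNat 2) l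
    have hom46l : Hom 0 ((46080 : Rl l)^l) := by simpa using hom_pow (hom_ofNat 46080) l
    have hom248 : Hom 0 ((24 : Rl l)^8) := by simpa using hom_pow (hom_ofNat 24) 8
    have hom0 : Hom 0 ((2 : Rl l)^l * (46080 : Rl l)^l * (24 : Rl l)^8 *
        17612050268160000) := by
      simpa using hom_mul (hom_mul (hom_mul hom2l hom46l) hom248)
        (hom_ofNat 17612050268160000)
    have hh := hom_mul hom0 homH4s
    rw [hFinalT]
    refine hh m ?_
    have : AnomalyAux.deg m = 6 := hm
    omega
  have hcoeq : MvPowerSeries.coeff m (((24 : Rl l) * E) * (((24 : Rl l) *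
      ∏ j : Fin 6, ((24 : Rl l) * A j)) * WS)) = 0 := by
    have h7 := HTOT m hdm
    rw [map_sub, sub_eq_zero] at h7
    rw [h7, HomFinal]
  have hprod46 : PCb = (46080 : Rl l)^l * PC := by
    rw [hPCb, hPCdef, Finset.prod_mul_distrib, Finset.prod_const, Finset.card_univ,
      Fintype.card_fin]
  have hprod24 : ∏ j : Fin 6, ((24 : Rl l) * A j) = (24 : Rl l)^6 * PA := by
    rw [hPAdef, Finset.prod_mul_distrib, Finset.prod_const, Finset.card_univ, Fintype.card_fin]
  have hBigEq : ((24 : Rl l) * E) * (((24 : Rl l) * ∏ j : Fin 6, ((24 : Rl l) * A j)) * WS) =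
      (((24^8 * 23040 * 46080^3 : ℕ)) : Rl l) * ((((46080^l : ℕ)) : Rl l) *
        (E * (PA * PC * IV^2 - PA * cu * Z))) := by
    rw [hWS, hprod46, hprod24]
    push_cast
    ring
  rw [hBigEq, coeff_natCast_mul, coeff_natCast_mul] at hcoeq
  have hN1 : ((24^8 * 23040 * 46080^3 : ℕ) : ℚ) ≠ 0 := Nat.cast_ne_zero.mpr (by positivity)
  have hN2 : ((46080^l : ℕ) : ℚ) ≠ 0 := Nat.cast_ne_zero.mpr (by positivity)
  exact ((mul_eq_zero.mp ((mul_eq_zero.mp hcoeq).resolve_left hN1)).resolve_left hN2)
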